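/- arXiv:1212.6211 — 3 statements merged into one kernel-verified Lean document; each statement's English description precedes it below -/
import Mathlib

section
/- For a fixed N ≥ 2, let ω_N be a cluster point as s → ∞ of a family of N-point s-energy minimizing configurations on a compact infinite metric space (A, ρ). Then γ(ω_N, A) ≤ 1, i.e., the mesh norm of ω_N does not exceed its separation distance. -/
open scoped BigOperators
open Filter Metric

/-- Separation distance of an `N`-point configuration. -/
noncomputable def sep {E : Type*} [MetricSpace E] {N : ℕ} (x : Fin N → E) : ℝ :=
  ⨅ p : {p : Fin N × Fin N // p.1 ≠ p.2}, dist (x p.1.1) (x p.1.2)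

/-- Mesh norm (covering radius) of a configuration relative to a set `S`. -/
noncomputable def mesh {E : Type*} [MetricSpace E] {N : ℕ} (S : Set E) (x : Fin N → E) : ℝ :=
  ⨆ y : S, ⨅ i, dist (y : E) (x i)

/-- `N`-point best-packing distance of the set `S`. -/
noncomputable def packDist {E : Type*} [MetricSpace E] (S : Set E) (N : ℕ) : ℝ :=
  ⨆ x : {x : Fin N → E // Function.Injective x ∧ ∀ i, x i ∈ S}, sep x.1

/-- Riesz `s`-energy of a configuration. -/
noncomputable def energy {E : Type*} [MetricSpace E] {N : ℕ} (s : ℝ) (x : Fin N → E) : ℝ :=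
  ∑ i, ∑ j ∈ Finset.univ.filter (· ≠ i), dist (x i) (x j) ^ (-s)

/-- Minimal `N`-point Riesz `s`-energy of the set `S`. -/
noncomputable def minEnergy {E : Type*} [MetricSpace E] (S : Set E) (N : ℕ) (s : ℝ) : ℝ :=
  ⨅ x : {x : Fin N → E // Function.Injective x ∧ ∀ i, x i ∈ S}, energy s x.1

lemma energy_split {E : Type*} [MetricSpace E] {N : ℕ} (s : ℝ) (z : Fin N → E) (i₀ : Fin N) :
    energy s z = 2 * (∑ j ∈ Finset.univ.filter (· ≠ i₀), dist (z i₀) (z j) ^ (-s))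
      + ∑ i ∈ Finset.univ.filter (· ≠ i₀), ∑ j ∈ Finset.univ.filter (fun j => j ≠ i ∧ j ≠ i₀),
          dist (z i) (z j) ^ (-s) := by
  unfold energy
  have h1 : (Finset.univ : Finset (Fin N)).filter (· ≠ i₀) = Finset.univ.erase i₀ := by
    ext j; simp [Finset.mem_erase]
  rw [h1]
  rw [← Finset.add_sum_erase _ _ (Finset.mem_univ i₀)]
  have h2 : ∀ i ∈ (Finset.univ : Finset (Fin N)).erase i₀,
      ∑ j ∈ Finset.univ.filter (· ≠ i), dist (z i) (z j) ^ (-s)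
        = dist (z i) (z i₀) ^ (-s)
          + ∑ j ∈ Finset.univ.filter (fun j => j ≠ i ∧ j ≠ i₀), dist (z i) (z j) ^ (-s) := by
    intro i hi
    have hii : i ≠ i₀ := Finset.ne_of_mem_erase hi
    have h3 : (Finset.univ : Finset (Fin N)).filter (fun j => j ≠ i ∧ j ≠ i₀)
        = ((Finset.univ : Finset (Fin N)).filter (· ≠ i)).erase i₀ := by
      ext j; simp [Finset.mem_erase, and_comm]
    have hmem : i₀ ∈ (Finset.univ : Finset (Fin N)).filter (· ≠ i) := by
      simp [Ne.symm hii]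
    rw [h3, ← Finset.add_sum_erase _ _ hmem]
  rw [Finset.sum_congr rfl h2, Finset.sum_add_distrib]
  have h4 : ∑ i ∈ (Finset.univ : Finset (Fin N)).erase i₀, dist (z i) (z i₀) ^ (-s)
      = ∑ j ∈ (Finset.univ : Finset (Fin N)).erase i₀, dist (z i₀) (z j) ^ (-s) := by
    apply Finset.sum_congr rfl; intro i _; rw [dist_comm]
  rw [h4, h1]; ring

lemma energy_nonneg {E : Type*} [MetricSpace E] {N : ℕ} (s : ℝ) (z : Fin N → E) :
    0 ≤ energy s z := by
  unfold energy
  apply Finset.sum_nonneg; intro i _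
  apply Finset.sum_nonneg; intro j _
  exact Real.rpow_nonneg dist_nonneg _

theorem stmt_5 {A : Type*} [MetricSpace A] [CompactSpace A] [Infinite A]
    (N : ℕ) (hN : 2 ≤ N) (x : Fin N → A)
    (hcluster : ∃ (sk : ℕ → ℝ) (xk : ℕ → Fin N → A),
      Filter.Tendsto sk Filter.atTop Filter.atTop ∧
      (∀ n, Function.Injective (xk n)) ∧
      (∀ n, energy (sk n) (xk n) = minEnergy (Set.univ : Set A) N (sk n)) ∧
      Filter.Tendsto xk Filter.atTop (nhds x)) :
    mesh (Set.univ : Set A) x ≤ sep x ∧ mesh (Set.univ : Set A) x / sep x ≤ 1 := by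
  obtain ⟨sk, xk, hs, hinj, hmin, hx⟩ := hcluster
  have hsep0 : 0 ≤ sep x := Real.iInf_nonneg fun p => dist_nonneg
  have hpt : ∀ i, Tendsto (fun n => xk n i) atTop (nhds (x i)) := by
    rw [tendsto_pi_nhds] at hx; exact hx
  have key : mesh (Set.univ : Set A) x ≤ sep x := by
    have : Nonempty (Set.univ : Set A) := ⟨⟨Classical.arbitrary A, trivial⟩⟩
    apply ciSup_le
    intro yy
    set y : A := (yy : A) with hy
    by_contra hcon
    push_neg at hcon
    set m : ℝ := ⨅ i, dist y (x i) with hm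
    have hmle : ∀ i, m ≤ dist y (x i) := by
      intro i
      exact ciInf_le ⟨0, by rintro _ ⟨i, rfl⟩; exact dist_nonneg⟩ i
    -- the pair attaining the separation
    have : Nonempty {p : Fin N × Fin N // p.1 ≠ p.2} := by
      refine ⟨⟨(⟨0, by omega⟩, ⟨1, by omega⟩), ?_⟩⟩
      simp [Fin.ext_iff]
    obtain ⟨⟨⟨i₀, j₀⟩, hij⟩, hpair⟩ := exists_eq_ciInf_of_finite
      (f := fun p : {p : Fin N × Fin N // p.1 ≠ p.2} => dist (x p.1.1) (x p.1.2))
    simp only [] at hpair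
    -- hpair : dist (x i₀) (x j₀) = sep x
    set δ : ℝ := sep x with hδ
    have hδm : δ < m := hcon
    set a : ℝ := δ + (m - δ)/3 with ha
    set b : ℝ := δ + 2*(m - δ)/3 with hb
    have ha0 : 0 < a := by simp only [ha]; linarith
    have hab : a < b := by simp only [ha, hb]; linarith
    have hb0 : 0 < b := lt_trans ha0 hab
    have hbm : b < m := by simp only [hb]; linarith
    have hδa : δ < a := by simp only [ha]; linarith
    -- eventual statements
    have ev1 : ∀ᶠ n in atTop, dist (xk n i₀) (xk n j₀) < a := by
      have hd : Tendsto (fun n => dist (xk n i₀) (xk n j₀)) atTop (nhds δ) := by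
        have := (hpt i₀).dist (hpt j₀)
        rwa [hpair] at this
      exact hd.eventually_lt_const hδa
    have ev2 : ∀ᶠ n in atTop, ∀ j, b < dist y (xk n j) := by
      rw [eventually_all]
      intro j
      have hd : Tendsto (fun n => dist y (xk n j)) atTop (nhds (dist y (x j))) :=
        tendsto_const_nhds.dist (hpt j)
      exact hd.eventually_const_lt (lt_of_lt_of_le hbm (hmle j))
    have ev3 : ∀ᶠ n in atTop, 0 < sk n := hs.eventually_gt_atTop 0
    have ev4 : ∀ᶠ n in atTop, Real.logb (b/a) ((N : ℝ) - 1) ≤ sk n :=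
      hs.eventually_ge_atTop _
    obtain ⟨n, h1, h2, h3, h4⟩ := ((ev1.and (ev2.and (ev3.and ev4)))).exists
    set s : ℝ := sk n with hsn
    set z : Fin N → A := xk n with hz
    set z' : Fin N → A := Function.update z i₀ y with hz'
    have hza : ∀ j, j ≠ i₀ → z' j = z j := fun j hj => Function.update_of_ne hj _ _
    have hzi : z' i₀ = y := Function.update_self _ _ _
    -- (b/a)^s ≥ N - 1
    have hba : 1 < b / a := (one_lt_div ha0).2 hab
    have hN1 : (0 : ℝ) < (N : ℝ) - 1 := by
      have : (2 : ℝ) ≤ (N : ℝ) := by exact_mod_cast hN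
      linarith
    have hpow : (N : ℝ) - 1 ≤ (b/a) ^ s := by
      have h5 : (b/a) ^ Real.logb (b/a) ((N:ℝ)-1) ≤ (b/a) ^ s :=
        (Real.rpow_le_rpow_left_iff hba).2 h4
      rwa [Real.rpow_logb (by linarith) (ne_of_gt hba) hN1] at h5
    -- distance at the minimal pair
    have hd0 : 0 < dist (z i₀) (z j₀) := by
      rw [dist_pos]
      exact fun hzz => hij (hinj n hzz)
    -- row bounds
    have hrow' : ∑ j ∈ Finset.univ.filter (· ≠ i₀), dist (z' i₀) (z' j) ^ (-s)
        ≤ ((N : ℝ) - 1) * b ^ (-s) := by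
      have hcard : ((Finset.univ : Finset (Fin N)).filter (· ≠ i₀)).card = N - 1 := by
        rw [Finset.filter_ne' Finset.univ i₀, Finset.card_erase_of_mem (Finset.mem_univ i₀)]
        simp
      have hterm : ∀ j ∈ (Finset.univ : Finset (Fin N)).filter (· ≠ i₀),
          dist (z' i₀) (z' j) ^ (-s) ≤ b ^ (-s) := by
        intro j hj
        have hji : j ≠ i₀ := by simpa using hj
        rw [hzi, hza j hji]
        have hbd : b ≤ dist y (z j) := (h2 j).le
        rw [Real.rpow_neg hb0.le, Real.rpow_neg dist_nonneg]
        apply inv_anti₀ (Real.rpow_pos_of_pos hb0 s)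
        exact Real.rpow_le_rpow hb0.le hbd h3.le
      calc ∑ j ∈ Finset.univ.filter (· ≠ i₀), dist (z' i₀) (z' j) ^ (-s)
          ≤ ((Finset.univ : Finset (Fin N)).filter (· ≠ i₀)).card • (b ^ (-s)) :=
            Finset.sum_le_card_nsmul _ _ _ hterm
        _ = ((N : ℝ) - 1) * b ^ (-s) := by
            rw [hcard, nsmul_eq_mul, Nat.cast_sub (by omega)]
            norm_num
    have hstep : ((N : ℝ) - 1) * b ^ (-s) ≤ a ^ (-s) := by
      have heq : (b/a) ^ s * b ^ (-s) = a ^ (-s) := by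
        rw [Real.rpow_neg ha0.le, Real.rpow_neg hb0.le, Real.div_rpow hb0.le ha0.le]
        field_simp
      calc ((N : ℝ) - 1) * b ^ (-s) ≤ (b/a) ^ s * b ^ (-s) :=
            mul_le_mul_of_nonneg_right hpow (Real.rpow_nonneg hb0.le _)
        _ = a ^ (-s) := heq
    have hrow : a ^ (-s) < ∑ j ∈ Finset.univ.filter (· ≠ i₀), dist (z i₀) (z j) ^ (-s) := by
      have hmem : j₀ ∈ (Finset.univ : Finset (Fin N)).filter (· ≠ i₀) := by
        simp [Ne.symm hij]
      have hlt : a ^ (-s) < dist (z i₀) (z j₀) ^ (-s) := by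
        rw [Real.rpow_neg ha0.le, Real.rpow_neg dist_nonneg]
        apply inv_strictAnti₀ (Real.rpow_pos_of_pos hd0 s)
        exact Real.rpow_lt_rpow hd0.le h1 h3
      calc a ^ (-s) < dist (z i₀) (z j₀) ^ (-s) := hlt
        _ ≤ ∑ j ∈ Finset.univ.filter (· ≠ i₀), dist (z i₀) (z j) ^ (-s) :=
            Finset.single_le_sum (fun j _ => Real.rpow_nonneg dist_nonneg _) hmem
    -- the tails agree
    have htail : ∑ i ∈ Finset.univ.filter (· ≠ i₀), ∑ j ∈ Finset.univ.filter
          (fun j => j ≠ i ∧ j ≠ i₀), dist (z' i) (z' j) ^ (-s)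
        = ∑ i ∈ Finset.univ.filter (· ≠ i₀), ∑ j ∈ Finset.univ.filter
          (fun j => j ≠ i ∧ j ≠ i₀), dist (z i) (z j) ^ (-s) := by
      apply Finset.sum_congr rfl
      intro i hi
      apply Finset.sum_congr rfl
      intro j hj
      have hii : i ≠ i₀ := by simpa using hi
      have hjj : j ≠ i₀ := by simp at hj; exact hj.2
      rw [hza i hii, hza j hjj]
    have hEE : energy s z' < energy s z := by
      rw [energy_split s z' i₀, energy_split s z i₀, htail]
      have := lt_of_le_of_lt (le_trans hrow' hstep) hrow
      linarith
    -- but z' is admissible, contradiction with minimality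
    have hz'inj : Function.Injective z' := by
      intro i j hzz
      by_cases hi : i = i₀ <;> by_cases hj : j = i₀
      · rw [hi, hj]
      · exfalso
        rw [hi, hzi, hza j hj] at hzz
        exact absurd (hzz ▸ (h2 j)) (by simp [dist_self]; linarith)
      · exfalso
        rw [hj, hzi, hza i hi] at hzz
        exact absurd (hzz ▸ (h2 i)) (by simp [dist_self]; linarith)
      · exact hinj n (by rwa [hza i hi, hza j hj] at hzz)
    have hle : minEnergy (Set.univ : Set A) N s ≤ energy s z' := by
      apply ciInf_le
        (f := fun w : {w : Fin N → A // Function.Injective w ∧ ∀ i, w i ∈ (Set.univ : Set A)}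
          => energy s w.1)
        ⟨0, by rintro _ ⟨w, rfl⟩; exact energy_nonneg _ _⟩
        ⟨z', hz'inj, fun i => Set.mem_univ _⟩
    rw [← hmin n] at hle
    exact absurd hEE (not_lt.2 hle)
  refine ⟨key, ?_⟩
  rcases eq_or_lt_of_le hsep0 with h | h
  · rw [← h, div_zero]; norm_num
  · exact (div_le_one h).2 key
end

section
/- The configuration Q = {(1,0,0), (-1,0,0), (0,1,0), (0,0,1), (0,0,-1)} on S² is a 5-point best-packing configuration: its minimum pairwise distance equals √2 = δ_5(S²), and exactly 8 of its 10 unordered pairs of points are at distance √2. -/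
open scoped BigOperators
open Filter Metric

noncomputable def pt (a b c : ℝ) : EuclideanSpace ℝ (Fin 3) :=
  (EuclideanSpace.equiv (Fin 3) ℝ).symm ![a, b, c]

noncomputable def Qconf : Fin 5 → EuclideanSpace ℝ (Fin 3) :=
  ![pt 1 0 0, pt (-1) 0 0, pt 0 1 0, pt 0 0 1, pt 0 0 (-1)]

section Aux

open Finset

local notation "⟪" x ", " y "⟫" => @inner ℝ _ _ x y

lemma dist_pt (a b c d e f : ℝ) :
    dist (pt a b c) (pt d e f) = Real.sqrt ((a-d)^2+(b-e)^2+(c-f)^2) := by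
  rw [EuclideanSpace.dist_eq]
  congr 1
  simp [pt, Fin.sum_univ_three, Real.dist_eq, sq_abs, sq]

lemma hne4 : Real.sqrt 4 ≠ Real.sqrt 2 := by
  rw [ne_eq, Real.sqrt_inj (by norm_num) (by norm_num)]; norm_num

lemma sqrt2_le_dist : ∀ i j : Fin 5, i ≠ j → Real.sqrt 2 ≤ dist (Qconf i) (Qconf j) := by
  intro i j hij
  fin_cases i <;> fin_cases j <;>
    first
      | exact absurd rfl hij
      | (show Real.sqrt 2 ≤ dist (pt _ _ _) (pt _ _ _)
         rw [dist_pt]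
         apply Real.sqrt_le_sqrt
         norm_num)

lemma sep_bddBelow {N : ℕ} (x : Fin N → EuclideanSpace ℝ (Fin 3)) :
    BddBelow (Set.range fun p : {p : Fin N × Fin N // p.1 ≠ p.2} =>
      dist (x p.1.1) (x p.1.2)) := by
  refine ⟨0, ?_⟩
  rintro _ ⟨p, rfl⟩
  exact dist_nonneg

lemma helper (v : Fin 5 → EuclideanSpace ℝ (Fin 3))
    (hneg : ∀ i j, i ≠ j → ⟪v i, v j⟫ < 0)
    (g : Fin 4 → ℝ) (hsum : ∑ i, g i • v (Fin.castSucc i) = 0)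
    (hpos : ∃ i, 0 < g i) : False := by
  set w : Fin 4 → EuclideanSpace ℝ (Fin 3) := fun i => v (Fin.castSucc i) with hw
  have hwne : ∀ i j : Fin 4, i ≠ j → ⟪w i, w j⟫ < 0 := fun i j hij =>
    hneg _ _ (by simpa using hij)
  have hw4 : ∀ i : Fin 4, ⟪w i, v 4⟫ < 0 := fun i =>
    hneg _ _ (ne_of_lt (Fin.castSucc_lt_last i))
  set P := univ.filter (fun i => 0 < g i) with hP
  set N := univ.filter (fun i => g i < 0) with hN
  have hPne : P.Nonempty := by
    obtain ⟨i, hi⟩ := hpos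
    exact ⟨i, by simp [hP, hi]⟩
  set u := ∑ i ∈ P, g i • w i with hu
  have hsplit : u + ∑ i ∈ N, g i • w i = 0 := by
    rw [← hsum, hu]
    rw [← Finset.sum_filter_add_sum_filter_not univ (fun i => 0 < g i) (fun i => g i • w i)]
    congr 1
    have key : ∑ i ∈ N, g i • w i
        = ∑ i ∈ univ.filter (fun i => ¬ 0 < g i), g i • w i := by
      refine Finset.sum_subset ?_ ?_
      · intro i hi
        have hi' : g i < 0 := (mem_filter.mp hi).2
        exact mem_filter.mpr ⟨mem_univ i, not_lt.mpr hi'.le⟩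
      · intro i hi hni
        have h1 : g i ≤ 0 := not_lt.mp (mem_filter.mp hi).2
        have h2 : ¬ g i < 0 := fun hc => hni (mem_filter.mpr ⟨mem_univ i, hc⟩)
        have : g i = 0 := le_antisymm h1 (not_lt.mp h2)
        simp [this]
    rw [key]
  rcases N.eq_empty_or_nonempty with hNe | hNne
  · have hu0 : u = 0 := by simpa [hNe] using hsplit
    have hEq : ⟪u, v 4⟫ = ∑ i ∈ P, g i * ⟪w i, v 4⟫ := by
      rw [hu, sum_inner]
      exact Finset.sum_congr rfl fun i _ => real_inner_smul_left _ _ _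
    rw [hu0, inner_zero_left] at hEq
    have hlt : ∑ i ∈ P, g i * ⟪w i, v 4⟫ < 0 := by
      apply Finset.sum_neg (fun i hi => ?_) hPne
      simp only [hP, mem_filter, mem_univ, true_and] at hi
      exact mul_neg_of_pos_of_neg hi (hw4 i)
    rw [← hEq] at hlt
    exact lt_irrefl _ hlt
  · have hu' : u = ∑ i ∈ N, (-g i) • w i := by
      have h2 := hsplit
      rw [add_eq_zero_iff_eq_neg] at h2
      rw [h2, ← Finset.sum_neg_distrib]
      exact Finset.sum_congr rfl fun i _ => (neg_smul _ _).symm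
    have hinner : ⟪u, u⟫ = ∑ i ∈ P, ∑ j ∈ N, g i * ((-g j) * ⟪w i, w j⟫) := by
      nth_rewrite 2 [hu']
      nth_rewrite 1 [hu]
      rw [sum_inner]
      refine Finset.sum_congr rfl fun i _ => ?_
      rw [real_inner_smul_left, inner_sum, Finset.mul_sum]
      refine Finset.sum_congr rfl fun j _ => ?_
      rw [real_inner_smul_right]
    have hlt : ∑ i ∈ P, ∑ j ∈ N, g i * ((-g j) * ⟪w i, w j⟫) < 0 := by
      apply Finset.sum_neg (fun i hi => ?_) hPne
      simp only [hP, mem_filter, mem_univ, true_and] at hi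
      apply Finset.sum_neg (fun j hj => ?_) hNne
      simp only [hN, mem_filter, mem_univ, true_and] at hj
      have hij : i ≠ j := by rintro rfl; exact absurd hi (not_lt.mpr hj.le)
      exact mul_neg_of_pos_of_neg hi (mul_neg_of_pos_of_neg (by linarith) (hwne i j hij))
    rw [← hinner] at hlt
    exact absurd hlt (not_lt.mpr real_inner_self_nonneg)

lemma obtuse (v : Fin 5 → EuclideanSpace ℝ (Fin 3)) :
    ∃ i j, i ≠ j ∧ 0 ≤ ⟪v i, v j⟫ := by
  by_contra h
  push_neg at h
  have hneg : ∀ i j, i ≠ j → ⟪v i, v j⟫ < 0 := fun i j hij => h i j hij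
  have hdep : ¬ LinearIndependent ℝ (fun i : Fin 4 => v (Fin.castSucc i)) := by
    intro hli
    have := hli.fintype_card_le_finrank
    simp [finrank_euclideanSpace] at this
  rw [Fintype.not_linearIndependent_iff] at hdep
  obtain ⟨g, hsum, i0, hi0⟩ := hdep
  rcases lt_or_gt_of_ne hi0 with hlt | hgt
  · apply helper v hneg (-g) ?_ ⟨i0, by simpa using hlt⟩
    simp only [Pi.neg_apply, neg_smul, Finset.sum_neg_distrib, hsum, neg_zero]
  · exact helper v hneg g hsum ⟨i0, hgt⟩

lemma sep_Qconf : sep Qconf = Real.sqrt 2 := by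
  haveI : Nonempty {p : Fin 5 × Fin 5 // p.1 ≠ p.2} := ⟨⟨(0, 1), by decide⟩⟩
  refine le_antisymm ?_ ?_
  · have h := ciInf_le (sep_bddBelow Qconf) (⟨(0, 2), by decide⟩ :
      {p : Fin 5 × Fin 5 // p.1 ≠ p.2})
    refine h.trans_eq ?_
    show dist (pt _ _ _) (pt _ _ _) = Real.sqrt 2
    rw [dist_pt]; norm_num
  · refine le_ciInf fun p => sqrt2_le_dist p.1.1 p.1.2 p.2

lemma Qconf_inj : Function.Injective Qconf := by
  intro i j h
  by_contra hij
  have h1 := sqrt2_le_dist i j hij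
  rw [h, dist_self] at h1
  have := Real.sqrt_pos.mpr (show (0:ℝ) < 2 by norm_num)
  linarith

lemma zero_eq_pt : (0 : EuclideanSpace ℝ (Fin 3)) = pt 0 0 0 := by
  ext i
  fin_cases i <;> rfl

lemma Qconf_mem : ∀ i, Qconf i ∈ Metric.sphere (0 : EuclideanSpace ℝ (Fin 3)) 1 := by
  intro i
  rw [Metric.mem_sphere, zero_eq_pt]
  fin_cases i <;>
    (show dist (pt _ _ _) (pt 0 0 0) = 1
     rw [dist_pt]; norm_num)

lemma sep_le_sqrt2 (x : Fin 5 → EuclideanSpace ℝ (Fin 3))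
    (hx : ∀ i, x i ∈ Metric.sphere (0 : EuclideanSpace ℝ (Fin 3)) 1) :
    sep x ≤ Real.sqrt 2 := by
  obtain ⟨i, j, hij, hin⟩ := obtuse x
  have hni : ‖x i‖ = 1 := by simpa [mem_sphere_zero_iff_norm] using hx i
  have hnj : ‖x j‖ = 1 := by simpa [mem_sphere_zero_iff_norm] using hx j
  have hsq : dist (x i) (x j) ^ 2 ≤ 2 := by
    rw [dist_eq_norm, norm_sub_sq_real, hni, hnj]
    nlinarith
  have hd : dist (x i) (x j) ≤ Real.sqrt 2 := by
    have := Real.sqrt_le_sqrt hsq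
    rwa [Real.sqrt_sq dist_nonneg] at this
  exact (ciInf_le (sep_bddBelow x) (⟨(i, j), hij⟩ :
    {p : Fin 5 × Fin 5 // p.1 ≠ p.2})).trans hd

lemma packDist_sphere : packDist (Metric.sphere (0 : EuclideanSpace ℝ (Fin 3)) 1) 5
    = Real.sqrt 2 := by
  have hQ : Nonempty {x : Fin 5 → EuclideanSpace ℝ (Fin 3) //
      Function.Injective x ∧ ∀ i, x i ∈ Metric.sphere (0 : EuclideanSpace ℝ (Fin 3)) 1} :=
    ⟨⟨Qconf, Qconf_inj, Qconf_mem⟩⟩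
  haveI := hQ
  refine le_antisymm ?_ ?_
  · exact ciSup_le fun x => sep_le_sqrt2 x.1 x.2.2
  · have hb : BddAbove (Set.range fun x : {x : Fin 5 → EuclideanSpace ℝ (Fin 3) //
        Function.Injective x ∧ ∀ i, x i ∈ Metric.sphere (0 : EuclideanSpace ℝ (Fin 3)) 1} =>
        sep x.1) := by
      refine ⟨Real.sqrt 2, ?_⟩
      rintro _ ⟨x, rfl⟩
      exact sep_le_sqrt2 x.1 x.2.2
    have := le_ciSup hb (⟨Qconf, Qconf_inj, Qconf_mem⟩ :
      {x : Fin 5 → EuclideanSpace ℝ (Fin 3) //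
        Function.Injective x ∧ ∀ i, x i ∈ Metric.sphere (0 : EuclideanSpace ℝ (Fin 3)) 1})
    rw [sep_Qconf] at this
    exact this

lemma count8 : (Finset.univ.filter fun p : Sym2 (Fin 5) => ¬ p.IsDiag ∧
      Sym2.lift ⟨fun i j => dist (Qconf i) (Qconf j), fun i j => dist_comm _ _⟩ p
        = Real.sqrt 2).card = 8 := by
  have hT : (Finset.univ.filter fun p : Sym2 (Fin 5) => ¬ p.IsDiag ∧
      Sym2.lift ⟨fun i j => dist (Qconf i) (Qconf j), fun i j => dist_comm _ _⟩ p
        = Real.sqrt 2) =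
      ({s(0,2), s(0,3), s(0,4), s(1,2), s(1,3), s(1,4), s(2,3), s(2,4)} :
        Finset (Sym2 (Fin 5))) := by
    ext p
    induction p using Sym2.ind with
    | _ i j =>
      simp only [Finset.mem_filter, Finset.mem_univ, true_and, Sym2.lift_mk]
      fin_cases i <;> fin_cases j <;>
        first
        | exact iff_of_false (fun h => h.1 (by decide)) (by decide)
        | refine iff_of_true ⟨by decide, ?_⟩ (by decide)
          · show dist (pt _ _ _) (pt _ _ _) = Real.sqrt 2
            rw [dist_pt]; norm_num
        | refine iff_of_false (fun h => hne4 ?_) (by decide)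
          · rw [← h.2]
            show Real.sqrt 4 = dist (pt _ _ _) (pt _ _ _)
            rw [dist_pt]; norm_num
  rw [hT]
  decide

end Aux

theorem stmt_12 :
    sep Qconf = Real.sqrt 2 ∧
    packDist (Metric.sphere (0 : EuclideanSpace ℝ (Fin 3)) 1) 5 = Real.sqrt 2 ∧
    (Finset.univ.filter fun p : Sym2 (Fin 5) => ¬ p.IsDiag ∧
      Sym2.lift ⟨fun i j => dist (Qconf i) (Qconf j), fun i j => dist_comm _ _⟩ p
        = Real.sqrt 2).card = 8 := by
  exact ⟨sep_Qconf, packDist_sphere, count8⟩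
end

section
/- Let {ω_N} be a sequence of N-point best-packing configurations on S² (Euclidean metric). Then liminf_{N→∞} γ(ω_N, S²) ≥ 1/√3, where γ is the mesh-separation ratio. (This follows from the planar packing constant Δ₂ = π/√12 and covering constant Θ₂ = 2π/√27, via the asymptotic bound γ(ω_N, Sⁿ) ≥ (1/2)(Θ_n/Δ_n)^{1/n} + o(1).) -/
open scoped BigOperators
open Filter Metric Function
open scoped RealInnerProductSpace

local notation "E3" => EuclideanSpace ℝ (Fin 3)

lemma ciInf_attained {ι : Type*} [Finite ι] [Nonempty ι] (f : ι → ℝ) :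
    ∃ i, (⨅ j, f j) = f i ∧ ∀ j, f i ≤ f j := by
  obtain ⟨i, hi⟩ := Finite.exists_min f
  exact ⟨i, le_antisymm (ciInf_le (Set.finite_range f).bddBelow i) (le_ciInf hi), hi⟩

lemma exists_unit_orth (a b : E3) :
    ∃ d : E3, ‖d‖ = 1 ∧ ⟪d, a⟫ = 0 ∧ ⟪d, b⟫ = 0 := by
  classical
  set V : Submodule ℝ E3 := Submodule.span ℝ (↑({a, b} : Finset E3)) with hV
  have hle : Module.finrank ℝ V ≤ 2 := by
    refine le_trans (finrank_span_finset_le_card ({a, b} : Finset E3)) ?_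
    exact le_trans (Finset.card_insert_le _ _) (by simp)
  have horth : Module.finrank ℝ (Vᗮ : Submodule ℝ E3) > 0 := by
    have h3 : Module.finrank ℝ E3 = 3 := by simp [finrank_euclideanSpace]
    have := Submodule.finrank_add_finrank_orthogonal V
    omega
  obtain ⟨v, hvV, hv0⟩ : ∃ v ∈ Vᗮ, v ≠ 0 := by
    refine Submodule.exists_mem_ne_zero_of_ne_bot (fun h => ?_)
    rw [h] at horth; simp at horth
  have ha : a ∈ V := Submodule.subset_span (by simp)
  have hb : b ∈ V := Submodule.subset_span (by simp)
  refine ⟨‖v‖⁻¹ • v, ?_, ?_, ?_⟩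
  · simp [norm_smul, inv_mul_cancel₀ (norm_ne_zero_iff.mpr hv0)]
  · rw [real_inner_smul_left]
    have : ⟪a, v⟫ = 0 := Submodule.inner_right_of_mem_orthogonal ha hvV
    rw [real_inner_comm] at this; rw [this]; ring
  · rw [real_inner_smul_left]
    have : ⟪b, v⟫ = 0 := Submodule.inner_right_of_mem_orthogonal hb hvV
    rw [real_inner_comm] at this; rw [this]; ring

set_option maxHeartbeats 1000000 in
lemma mesh_eq_max {N : ℕ} (hN : 0 < N) (x : Fin N → E3) :
    ∃ y : E3, ‖y‖ = 1 ∧ mesh (Metric.sphere (0 : E3) 1) x = (⨅ i, dist y (x i)) ∧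
      ∀ z : E3, ‖z‖ = 1 → (⨅ i, dist z (x i)) ≤ (⨅ i, dist y (x i)) := by
  haveI : Nonempty (Fin N) := ⟨⟨0, hN⟩⟩
  set g : E3 → ℝ := fun y => ⨅ i, dist y (x i) with hg
  have hginf : ∀ y : E3, g y = Metric.infDist y (Set.range x) := by
    intro y
    rw [Metric.infDist_eq_iInf]
    refine le_antisymm (le_ciInf ?_) (le_ciInf ?_)
    · rintro ⟨z, i, rfl⟩
      exact ciInf_le (Set.finite_range _).bddBelow i
    · intro i
      exact ciInf_le ⟨0, by rintro _ ⟨p, rfl⟩; exact dist_nonneg⟩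
        (⟨x i, Set.mem_range_self i⟩ : Set.range x)
  have hgc : Continuous g := by
    have : g = fun y => Metric.infDist y (Set.range x) := funext hginf
    rw [this]; exact Metric.continuous_infDist_pt _
  have snon : (Metric.sphere (0 : E3) 1).Nonempty :=
    NormedSpace.sphere_nonempty.mpr zero_le_one
  obtain ⟨y, hymem, hmax⟩ := (isCompact_sphere (0 : E3) 1).exists_isMaxOn snon
    hgc.continuousOn
  have hy : ‖y‖ = 1 := mem_sphere_zero_iff_norm.mp hymem
  have hmax' : ∀ z : E3, ‖z‖ = 1 → g z ≤ g y := fun z hz =>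
    hmax (mem_sphere_zero_iff_norm.mpr hz)
  refine ⟨y, hy, ?_, hmax'⟩
  haveI : Nonempty ↥(Metric.sphere (0 : E3) 1) := snon.to_subtype
  refine le_antisymm (ciSup_le fun v => hmax' v (mem_sphere_zero_iff_norm.mp v.2)) ?_
  exact le_ciSup (f := fun v : ↥(Metric.sphere (0 : E3) 1) => g (v : E3))
    ⟨g y, by rintro _ ⟨v, rfl⟩; exact hmax' v (mem_sphere_zero_iff_norm.mp v.2)⟩
    ⟨y, hymem⟩

set_option maxHeartbeats 1000000 in
lemma core {N : ℕ} (hN : 2 ≤ N) (x : Fin N → E3) (hinj : Function.Injective x)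
    (hx : ∀ i, ‖x i‖ = 1) (y : E3) (hy : ‖y‖ = 1)
    (hmax : ∀ z : E3, ‖z‖ = 1 → (⨅ i, dist z (x i)) ≤ (⨅ i, dist y (x i)))
    (hA : (⨅ i, dist y (x i)) ^ 2 < 2) :
    ∃ i j, i ≠ j ∧ dist (x i) (x j) ≤ Real.sqrt 3 * (⨅ i, dist y (x i)) := by
  haveI : Nonempty (Fin N) := ⟨⟨0, by omega⟩⟩
  set η : ℝ := ⨅ i, dist y (x i) with hη
  by_contra hcon
  push_neg at hcon
  have hη0 : 0 ≤ η := le_ciInf fun i => dist_nonneg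
  have hlow : ∀ i, η ≤ dist y (x i) := fun i =>
    ciInf_le ⟨0, by rintro _ ⟨p, rfl⟩; exact dist_nonneg⟩ i
  set c : ℝ := 1 - η ^ 2 / 2 with hc
  have hc0 : 0 < c := by simp only [hc]; nlinarith
  have h2c : 2 - 2 * c = η ^ 2 := by simp only [hc]; ring
  set w : Fin N → E3 := fun i => x i - c • y with hw
  have hyc : ∀ i, dist y (x i) = η → ⟪y, x i⟫ = c := by
    intro i hi
    have h1 : dist y (x i) ^ 2 = ‖y‖ ^ 2 - 2 * ⟪y, x i⟫ + ‖x i‖ ^ 2 := by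
      rw [dist_eq_norm]; exact norm_sub_sq_real y (x i)
    rw [hi, hy, hx i] at h1
    simp only [hc]; nlinarith
  have hyw : ∀ i, dist y (x i) = η → ⟪y, w i⟫ = 0 := by
    intro i hi
    simp only [hw, inner_sub_right, real_inner_smul_right,
      real_inner_self_eq_norm_sq, hy, hyc i hi]
    ring
  set ρ2 : ℝ := 1 - c ^ 2 with hρ2
  have hρ2le : ρ2 ≤ η ^ 2 := by simp only [hρ2, hc]; nlinarith
  have hρ20 : 0 ≤ ρ2 := by simp only [hρ2, hc]; nlinarith
  have hw2 : ∀ i, dist y (x i) = η → ‖w i‖ ^ 2 = ρ2 := by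
    intro i hi
    have h1 : ‖x i - c • y‖ ^ 2 = ‖x i‖ ^ 2 - 2 * ⟪x i, c • y⟫ + ‖c • y‖ ^ 2 :=
      norm_sub_sq_real _ _
    have h2 : ⟪x i, c • y⟫ = c * c := by
      rw [real_inner_smul_right, real_inner_comm, hyc i hi]
    have h3 : ‖c • y‖ ^ 2 = c ^ 2 := by
      rw [norm_smul, hy, mul_one, Real.norm_eq_abs, sq_abs]
    simp only [hw]
    rw [h1, h2, h3, hx i, hρ2]; ring
  have hxw : ∀ i j, x i - x j = w i - w j := by
    intro i j; simp only [hw]; abel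
  have hpair : ∀ i j, i ≠ j → dist y (x i) = η → dist y (x j) = η →
      ⟪w i, w j⟫ < -ρ2 / 2 := by
    intro i j hij hi hj
    have hd : Real.sqrt 3 * η < dist (x i) (x j) := hcon i j hij
    have hs3 : Real.sqrt 3 ^ 2 = 3 := Real.sq_sqrt (by norm_num)
    have hd2 : 3 * η ^ 2 < dist (x i) (x j) ^ 2 := by
      have h := pow_lt_pow_left₀ hd (by positivity) (n := 2) (by norm_num)
      calc 3 * η ^ 2 = (Real.sqrt 3 * η) ^ 2 := by rw [mul_pow, hs3]
        _ < _ := h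
    have he : dist (x i) (x j) ^ 2 = ρ2 - 2 * ⟪w i, w j⟫ + ρ2 := by
      rw [dist_eq_norm, hxw i j, norm_sub_sq_real, hw2 i hi, hw2 j hj]
    nlinarith
  have htriple : ∀ i j k, i ≠ j → i ≠ k → j ≠ k → dist y (x i) = η →
      dist y (x j) = η → dist y (x k) = η → False := by
    intro i j k hij hik hjk hi hj hk
    have e1 := hpair i j hij hi hj
    have e2 := hpair i k hik hi hk
    have e3 := hpair j k hjk hj hk
    have h0 : 0 ≤ ‖w i + w j + w k‖ ^ 2 := sq_nonneg _
    have expand : ‖w i + w j + w k‖ ^ 2 =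
        ρ2 + ρ2 + ρ2 + 2 * ⟪w i, w j⟫ + 2 * ⟪w i, w k⟫ + 2 * ⟪w j, w k⟫ := by
      have h1 : ‖w i + w j + w k‖ ^ 2 =
          ‖w i + w j‖ ^ 2 + 2 * ⟪w i + w j, w k⟫ + ‖w k‖ ^ 2 := norm_add_sq_real _ _
      have h2 : ‖w i + w j‖ ^ 2 = ‖w i‖ ^ 2 + 2 * ⟪w i, w j⟫ + ‖w j‖ ^ 2 :=
        norm_add_sq_real _ _
      rw [h1, h2, inner_add_left, hw2 i hi, hw2 j hj, hw2 k hk]; ring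
    rw [expand] at h0
    linarith
  obtain ⟨i₀, hi₀eq, hi₀min⟩ := ciInf_attained (fun i => dist y (x i))
  have hi₀ : dist y (x i₀) = η := hi₀eq.symm
  have hD : ∃ d : E3, ‖d‖ = 1 ∧ ⟪d, y⟫ = 0 ∧
      ∀ i, dist y (x i) = η → ⟪d, w i⟫ ≤ 0 := by
    by_cases hsing : ∀ j, dist y (x j) = η → j = i₀
    · obtain ⟨d, hd1, hdy, hdw⟩ := exists_unit_orth y (w i₀)
      exact ⟨d, hd1, hdy, fun i hi => by rw [hsing i hi]; exact le_of_eq hdw⟩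
    · push_neg at hsing
      obtain ⟨i₁, hi₁, hi₁ne⟩ := hsing
      have hK2 : ∀ k, dist y (x k) = η → k = i₀ ∨ k = i₁ := by
        intro k hk
        by_contra hkk
        push_neg at hkk
        exact htriple i₀ i₁ k (Ne.symm hi₁ne) (Ne.symm hkk.1) (Ne.symm hkk.2) hi₀ hi₁ hk
      by_cases hs : w i₀ + w i₁ = 0
      · obtain ⟨d, hd1, hdy, hdw⟩ := exists_unit_orth y (w i₀)
        have hw1 : w i₁ = -w i₀ := eq_neg_of_add_eq_zero_right hs
        refine ⟨d, hd1, hdy, fun i hi => ?_⟩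
        rcases hK2 i hi with rfl | rfl
        · exact le_of_eq hdw
        · rw [hw1, inner_neg_right, hdw, neg_zero]
      · set sv : E3 := w i₀ + w i₁ with hsv
        have hsv0 : ‖sv‖ ≠ 0 := norm_ne_zero_iff.mpr hs
        have hinv0 : 0 ≤ ‖sv‖⁻¹ := inv_nonneg.mpr (norm_nonneg _)
        have hcs : -ρ2 ≤ ⟪w i₀, w i₁⟫ := by
          have h1 := abs_real_inner_le_norm (w i₀) (w i₁)
          have h2 := neg_le_of_abs_le h1
          have ha : ‖w i₀‖ ^ 2 = ρ2 := hw2 i₀ hi₀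
          have hb : ‖w i₁‖ ^ 2 = ρ2 := hw2 i₁ hi₁
          nlinarith [norm_nonneg (w i₀), norm_nonneg (w i₁), sq_nonneg (‖w i₀‖ - ‖w i₁‖)]
        have h00 : ⟪w i₀, w i₀⟫ = ρ2 := by
          rw [real_inner_self_eq_norm_sq]; exact hw2 i₀ hi₀
        have h11 : ⟪w i₁, w i₁⟫ = ρ2 := by
          rw [real_inner_self_eq_norm_sq]; exact hw2 i₁ hi₁
        have hcomm : ⟪w i₁, w i₀⟫ = ⟪w i₀, w i₁⟫ := real_inner_comm _ _
        have hsw0 : 0 ≤ ⟪sv, w i₀⟫ := by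
          rw [hsv, inner_add_left, h00, hcomm]; linarith
        have hsw1 : 0 ≤ ⟪sv, w i₁⟫ := by
          rw [hsv, inner_add_left, h11]; linarith
        refine ⟨-(‖sv‖⁻¹ • sv), ?_, ?_, ?_⟩
        · rw [norm_neg, norm_smul, norm_inv, norm_norm, inv_mul_cancel₀ hsv0]
        · have e0 : ⟪w i₀, y⟫ = 0 := by rw [real_inner_comm]; exact hyw i₀ hi₀
          have e1 : ⟪w i₁, y⟫ = 0 := by rw [real_inner_comm]; exact hyw i₁ hi₁
          rw [inner_neg_left, real_inner_smul_left, hsv, inner_add_left, e0, e1]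
          ring
        · intro i hi
          rw [inner_neg_left, real_inner_smul_left]
          rcases hK2 i hi with rfl | rfl
          · exact neg_nonpos_of_nonneg (mul_nonneg hinv0 hsw0)
          · exact neg_nonpos_of_nonneg (mul_nonneg hinv0 hsw1)
  obtain ⟨d, hd1, hdy, hdK⟩ := hD
  -- far-point margin
  classical
  set F : Finset (Fin N) := Finset.univ.filter (fun i => dist y (x i) ≠ η) with hF
  have hm : ∃ m : ℝ, 0 < m ∧ ∀ i ∈ F, η + m ≤ dist y (x i) := by
    by_cases hFne : F.Nonempty
    · refine ⟨F.inf' hFne (fun i => dist y (x i) - η), ?_, ?_⟩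
      · rw [Finset.lt_inf'_iff]
        intro i hi
        have h1 := (Finset.mem_filter.mp hi).2
        have h2 := hlow i
        have : η < dist y (x i) := lt_of_le_of_ne h2 (Ne.symm h1)
        linarith
      · intro i hi
        have := Finset.inf'_le (fun i => dist y (x i) - η) hi
        linarith
    · exact ⟨1, one_pos, fun i hi => absurd ⟨i, hi⟩ hFne⟩
  obtain ⟨m, hm0, hmF⟩ := hm
  set s₀ : ℝ := min (1/2) (m/4) with hs₀
  have hs₀0 : 0 < s₀ := lt_min (by norm_num) (by linarith)
  have hs₀h : s₀ ≤ 1/2 := min_le_left _ _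
  have hs₀m : s₀ ≤ m/4 := min_le_right _ _
  set q : ℝ := Real.sqrt (1 - s₀^2) with hq
  have hq2 : q^2 = 1 - s₀^2 := Real.sq_sqrt (by nlinarith)
  have hq0 : 0 ≤ q := Real.sqrt_nonneg _
  have hq1 : q < 1 := by nlinarith
  have hql : 1 - s₀^2 ≤ q := by nlinarith [mul_nonneg hq0 (by linarith : (0:ℝ) ≤ 1 - q)]
  set z : E3 := q • y + s₀ • d with hz
  have hyd : ⟪y, d⟫ = 0 := by rw [real_inner_comm]; exact hdy
  have hqy : ‖q • y‖ ^ 2 = q ^ 2 := by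
    rw [norm_smul, hy, mul_one, Real.norm_eq_abs, sq_abs]
  have hsd : ‖s₀ • d‖ ^ 2 = s₀ ^ 2 := by
    rw [norm_smul, hd1, mul_one, Real.norm_eq_abs, sq_abs]
  have hcross : ⟪q • y, s₀ • d⟫ = 0 := by
    rw [real_inner_smul_left, real_inner_smul_right, hyd]; ring
  have hz1 : ‖z‖ = 1 := by
    have h1 : ‖z‖^2 = 1 := by
      rw [hz, norm_add_sq_real, hqy, hsd, hcross, hq2]; ring
    nlinarith [norm_nonneg z]
  have hzy : ⟪z, y⟫ = q := by
    rw [hz, inner_add_left, real_inner_smul_left, real_inner_smul_left,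
      real_inner_self_eq_norm_sq, hy, hdy]
    ring
  have hdzy : dist z y ≤ m/2 := by
    have h1 : dist z y ^ 2 = 2 - 2*q := by
      rw [dist_eq_norm, norm_sub_sq_real, hz1, hy, hzy]; ring
    have h2 : dist z y ^ 2 ≤ (m/2)^2 := by
      rw [h1]; nlinarith [sq_nonneg (m/4 - s₀), hs₀m, hs₀0, hm0, hql]
    exact le_of_pow_le_pow_left₀ (by norm_num) (by linarith) h2
  have hfar : ∀ i, η < dist z (x i) := by
    intro i
    by_cases hi : dist y (x i) = η
    · have hxd : x i = c • y + w i := by simp [hw]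
      have h2 : ⟪d, x i⟫ = ⟪d, w i⟫ := by
        rw [hxd, inner_add_right, real_inner_smul_right, hdy]; ring
      have hzx : ⟪z, x i⟫ ≤ q * c := by
        rw [hz, inner_add_left, real_inner_smul_left, real_inner_smul_left,
          hyc i hi, h2]
        nlinarith [hdK i hi, hs₀0]
      have hd2 : η^2 < dist z (x i)^2 := by
        have h1 : dist z (x i)^2 = 2 - 2*⟪z, x i⟫ := by
          rw [dist_eq_norm, norm_sub_sq_real, hz1, hx i]; ring
        nlinarith [mul_pos (by linarith : (0:ℝ) < 1 - q) hc0]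
      exact lt_of_pow_lt_pow_left₀ 2 dist_nonneg hd2
    · have hiF : i ∈ F := Finset.mem_filter.mpr ⟨Finset.mem_univ i, hi⟩
      have hge := hmF i hiF
      have htri : dist y (x i) ≤ dist y z + dist z (x i) := dist_triangle _ _ _
      have hcomm : dist y z = dist z y := dist_comm _ _
      linarith
  obtain ⟨istar, histar, -⟩ := ciInf_attained (fun i => dist z (x i))
  have h1 : η < ⨅ i, dist z (x i) := by rw [histar]; exact hfar _
  have h2 := hmax z hz1
  linarith

lemma sep_le_dist {E : Type*} [MetricSpace E] {N : ℕ} (x : Fin N → E) {i j : Fin N}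
    (h : i ≠ j) : sep x ≤ dist (x i) (x j) := by
  have bdd : BddBelow (Set.range fun p : {p : Fin N × Fin N // p.1 ≠ p.2} =>
      dist (x p.1.1) (x p.1.2)) := ⟨0, by rintro _ ⟨p, rfl⟩; exact dist_nonneg⟩
  exact ciInf_le bdd ⟨(i, j), h⟩

lemma pairsNonempty {N : ℕ} (hN : 2 ≤ N) :
    Nonempty {p : Fin N × Fin N // p.1 ≠ p.2} :=
  ⟨⟨(⟨0, by omega⟩, ⟨1, by omega⟩), by simp [Fin.ext_iff]⟩⟩

lemma sep_pos {N : ℕ} (hN : 2 ≤ N) {E : Type*} [MetricSpace E] (x : Fin N → E)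
    (hinj : Function.Injective x) : 0 < sep x := by
  haveI := pairsNonempty hN
  obtain ⟨p, hp, -⟩ := ciInf_attained
    (fun p : {p : Fin N × Fin N // p.1 ≠ p.2} => dist (x p.1.1) (x p.1.2))
  rw [sep, hp]
  exact dist_pos.mpr (fun h => p.2 (hinj h))

lemma sep_le_two {N : ℕ} (hN : 2 ≤ N) (x : Fin N → E3)
    (hS : ∀ i, x i ∈ Metric.sphere (0 : E3) 1) : sep x ≤ 2 := by
  have h0 : (⟨0, by omega⟩ : Fin N) ≠ ⟨1, by omega⟩ := by simp [Fin.ext_iff]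
  refine le_trans (sep_le_dist x h0) ?_
  rw [dist_eq_norm]
  refine le_trans (norm_sub_le _ _) ?_
  rw [mem_sphere_zero_iff_norm.mp (hS _), mem_sphere_zero_iff_norm.mp (hS _)]
  norm_num

lemma sep_le_sqrt3_mesh {N : ℕ} (hN : 2 ≤ N) (x : Fin N → E3)
    (hinj : Function.Injective x) (hS : ∀ i, x i ∈ Metric.sphere (0 : E3) 1) :
    sep x ≤ Real.sqrt 3 * mesh (Metric.sphere (0 : E3) 1) x := by
  haveI : Nonempty (Fin N) := ⟨⟨0, by omega⟩⟩
  obtain ⟨y, hy, hmesh, hmax⟩ := mesh_eq_max (by omega) x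
  set η : ℝ := ⨅ i, dist y (x i) with hη
  have hη0 : 0 ≤ η := le_ciInf fun i => dist_nonneg
  rcases lt_or_ge (η ^ 2) 2 with h2 | h2
  · obtain ⟨i, j, hij, hle⟩ := core hN x hinj
      (fun i => mem_sphere_zero_iff_norm.mp (hS i)) y hy hmax h2
    rw [hmesh]
    exact le_trans (sep_le_dist x hij) hle
  · have hsep2 : sep x ≤ 2 := sep_le_two hN x hS
    rw [hmesh]
    have hsq2 : Real.sqrt 2 ≤ η := by
      calc Real.sqrt 2 ≤ Real.sqrt (η ^ 2) := Real.sqrt_le_sqrt h2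
        _ = η := Real.sqrt_sq hη0
    have s3 : Real.sqrt 2 ≤ Real.sqrt 3 := Real.sqrt_le_sqrt (by norm_num)
    have t1 : Real.sqrt 2 * Real.sqrt 2 ≤ Real.sqrt 2 * η :=
      mul_le_mul_of_nonneg_left hsq2 (Real.sqrt_nonneg 2)
    have t2 : Real.sqrt 2 * η ≤ Real.sqrt 3 * η :=
      mul_le_mul_of_nonneg_right s3 hη0
    have t3 : Real.sqrt 2 * Real.sqrt 2 = 2 := Real.mul_self_sqrt (by norm_num)
    linarith

lemma mesh_le_sep_of_drop {N : ℕ} (hN : 2 ≤ N) (x : Fin N → E3)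
    (hinj : Function.Injective x) (hS : ∀ i, x i ∈ Metric.sphere (0 : E3) 1)
    (hbest : sep x = packDist (Metric.sphere (0 : E3) 1) N)
    (hlt : packDist (Metric.sphere (0 : E3) 1) (N + 1) <
      packDist (Metric.sphere (0 : E3) 1) N) :
    mesh (Metric.sphere (0 : E3) 1) x ≤ sep x := by
  haveI : Nonempty (Fin N) := ⟨⟨0, by omega⟩⟩
  have hsep0 : 0 < sep x := sep_pos hN x hinj
  by_contra hcon
  push_neg at hcon
  -- find a deep hole y
  have snon : (Metric.sphere (0 : E3) 1).Nonempty :=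
    NormedSpace.sphere_nonempty.mpr zero_le_one
  haveI : Nonempty ↥(Metric.sphere (0 : E3) 1) := snon.to_subtype
  obtain ⟨y, hymem, hygt⟩ : ∃ y ∈ Metric.sphere (0 : E3) 1,
      sep x < ⨅ i, dist y (x i) := by
    by_contra h
    push_neg at h
    have : mesh (Metric.sphere (0 : E3) 1) x ≤ sep x :=
      ciSup_le fun v => h v v.2
    linarith
  have hglow : ∀ i, sep x < dist y (x i) := by
    intro i
    exact lt_of_lt_of_le hygt (ciInf_le (Set.finite_range _).bddBelow i)
  have hynr : y ∉ Set.range x := by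
    rintro ⟨i, rfl⟩
    have := hglow i
    simp at this
    linarith
  set x' : Fin (N + 1) → E3 := Fin.cons y x with hx'
  have hinj' : Function.Injective x' := Fin.cons_injective_iff.mpr ⟨hynr, hinj⟩
  have hS' : ∀ i, x' i ∈ Metric.sphere (0 : E3) 1 := by
    intro i
    induction i using Fin.cases with
    | zero => simpa [hx'] using hymem
    | succ j => simpa [hx'] using hS j
  have hsep' : sep x ≤ sep x' := by
    haveI := pairsNonempty (show 2 ≤ N + 1 by omega)
    refine le_ciInf ?_
    rintro ⟨⟨a, b⟩, hab⟩
    induction a using Fin.cases with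
    | zero =>
      induction b using Fin.cases with
      | zero => exact absurd rfl hab
      | succ j =>
        simp only [hx', Fin.cons_zero, Fin.cons_succ]
        exact le_of_lt (hglow j)
    | succ i =>
      induction b using Fin.cases with
      | zero =>
        simp only [hx', Fin.cons_zero, Fin.cons_succ]
        rw [dist_comm]
        exact le_of_lt (hglow i)
      | succ j =>
        simp only [hx', Fin.cons_succ]
        have hij : i ≠ j := by
          intro h; apply hab; rw [h]
        exact sep_le_dist x hij
  have hpack : sep x' ≤ packDist (Metric.sphere (0 : E3) 1) (N + 1) := by
    refine le_ciSup (f := fun c : {c : Fin (N + 1) → E3 //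
        Function.Injective c ∧ ∀ i, c i ∈ Metric.sphere (0 : E3) 1} => sep c.1) ?_
      ⟨x', hinj', hS'⟩
    refine ⟨2, ?_⟩
    rintro _ ⟨c, rfl⟩
    exact sep_le_two (by omega) c.1 c.2.2
  rw [hbest] at hsep'
  linarith

lemma packDist_small (x : (N : ℕ) → Fin N → E3)
    (hinj : ∀ N, Function.Injective (x N))
    (hS : ∀ N i, x N i ∈ Metric.sphere (0 : E3) 1) :
    ∀ ε : ℝ, 0 < ε → ∃ M : ℕ, ∀ N, M ≤ N →
      packDist (Metric.sphere (0 : E3) 1) N ≤ ε := by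
  intro ε hε
  obtain ⟨t, htfin, hcov⟩ := totallyBounded_iff.mp
    ((isCompact_sphere (0 : E3) 1).totallyBounded) (ε / 2) (by linarith)
  haveI := htfin.fintype
  refine ⟨Fintype.card t + 1, fun N hN => ?_⟩
  haveI : Nonempty {c : Fin N → E3 // Function.Injective c ∧
      ∀ i, c i ∈ Metric.sphere (0 : E3) 1} := ⟨⟨x N, hinj N, hS N⟩⟩
  refine ciSup_le ?_
  rintro ⟨c, hcinj, hcS⟩
  have hch : ∀ i : Fin N, ∃ p : t, c i ∈ Metric.ball (p : E3) (ε / 2) := by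
    intro i
    have := hcov (hcS i)
    simp only [Set.mem_iUnion] at this
    obtain ⟨p, hp, hmem⟩ := this
    exact ⟨⟨p, hp⟩, hmem⟩
  choose f hf using hch
  have hcard : Fintype.card t < Fintype.card (Fin N) := by
    simp only [Fintype.card_fin]; omega
  obtain ⟨i, j, hij, hfij⟩ := Fintype.exists_ne_map_eq_of_card_lt f hcard
  have hd : dist (c i) (c j) < ε := by
    have h1 : dist (c i) (f i : E3) < ε / 2 := mem_ball.mp (hf i)
    have h2 : dist (c j) (f j : E3) < ε / 2 := mem_ball.mp (hf j)
    rw [hfij] at h1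
    calc dist (c i) (c j) ≤ dist (c i) (f j : E3) + dist (f j : E3) (c j) :=
          dist_triangle _ _ _
      _ = dist (c i) (f j : E3) + dist (c j) (f j : E3) := by rw [dist_comm (f j : E3)]
      _ < ε / 2 + ε / 2 := by exact add_lt_add h1 h2
      _ = ε := by ring
  exact le_of_lt (lt_of_le_of_lt (sep_le_dist c hij) hd)

theorem stmt_18 (x : (N : ℕ) → Fin N → EuclideanSpace ℝ (Fin 3))
    (hinj : ∀ N, Function.Injective (x N))
    (hS : ∀ N i, x N i ∈ Metric.sphere (0 : EuclideanSpace ℝ (Fin 3)) 1)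
    (hbest : ∀ N, sep (x N) = packDist (Metric.sphere (0 : EuclideanSpace ℝ (Fin 3)) 1) N) :
    1 / Real.sqrt 3 ≤
      Filter.liminf
        (fun N => mesh (Metric.sphere (0 : EuclideanSpace ℝ (Fin 3)) 1) (x N) / sep (x N))
        Filter.atTop := by
  have hlower : ∀ N : ℕ, 2 ≤ N → 1 / Real.sqrt 3 ≤
      mesh (Metric.sphere (0 : E3) 1) (x N) / sep (x N) := by
    intro N hN
    have hsp := sep_pos hN (x N) (hinj N)
    have hle := sep_le_sqrt3_mesh hN (x N) (hinj N) (hS N)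
    have hs3 : (0:ℝ) < Real.sqrt 3 := Real.sqrt_pos.mpr (by norm_num)
    rw [div_le_div_iff₀ hs3 hsp]
    nlinarith [hle]
  have hfreq : ∀ M : ℕ, ∃ N, M ≤ N ∧
      mesh (Metric.sphere (0 : E3) 1) (x N) / sep (x N) ≤ 1 := by
    intro M
    set M' := max M 2 with hM'
    have hM'2 : 2 ≤ M' := le_max_right _ _
    have hdrop : ∃ N, M' ≤ N ∧
        packDist (Metric.sphere (0 : E3) 1) (N + 1) <
          packDist (Metric.sphere (0 : E3) 1) N := by
      by_contra h
      push_neg at h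
      have hmono : ∀ N, M' ≤ N →
          packDist (Metric.sphere (0 : E3) 1) M' ≤
            packDist (Metric.sphere (0 : E3) 1) N := by
        intro N
        induction N with
        | zero => intro h0; exact absurd h0 (by omega)
        | succ n ih =>
          intro hsucc
          rcases Nat.lt_or_ge n M' with hlt | hge
          · have heq : M' = n + 1 := by omega
            rw [← heq]
          · exact le_trans (ih hge) (h n hge)
      have hpos : 0 < packDist (Metric.sphere (0 : E3) 1) M' := by
        rw [← hbest M']; exact sep_pos hM'2 _ (hinj M')
      obtain ⟨M₀, hM₀⟩ := packDist_small x hinj hS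
        (packDist (Metric.sphere (0 : E3) 1) M' / 2) (by linarith)
      have h1 := hM₀ (max M₀ M') (le_max_left _ _)
      have h2 := hmono (max M₀ M') (le_max_right _ _)
      linarith
    obtain ⟨N, hNM, hlt⟩ := hdrop
    have hm := mesh_le_sep_of_drop (le_trans hM'2 hNM) (x N) (hinj N) (hS N)
      (hbest N) hlt
    refine ⟨N, le_trans (le_max_left M 2) hNM, ?_⟩
    exact (div_le_one (sep_pos (le_trans hM'2 hNM) (x N) (hinj N))).mpr hm
  rw [Filter.liminf_eq]
  refine le_csSup ⟨1, ?_⟩ ?_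
  · rintro a ha
    simp only [Set.mem_setOf_eq, eventually_atTop] at ha
    obtain ⟨M, hM⟩ := ha
    obtain ⟨N, hNM, hN1⟩ := hfreq M
    exact le_trans (hM N hNM) hN1
  · simp only [Set.mem_setOf_eq, eventually_atTop]
    exact ⟨2, fun N hN => hlower N hN⟩
end
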